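/- arXiv:2208.03478 — 3 statements merged into one kernel-verified Lean document; each statement's English description precedes it below -/
import Mathlib

section
/- Let (B_k)_{k∈ℕ} be a nonnegative stochastic process adapted to a filtration, and suppose there exist constants 0 < κ < 1 and γ ≥ 0 such that E[B_{k+1} | F_k] ≤ κ B_k + γ for all k. Then for any η ≥ γ/(1−κ), any time horizon T ∈ ℕ, and any initial value B_0 = b ≤ α, the probability that sup_{0 ≤ k ≤ T} B_k ≥ η is at most 1 − (1 − α/η)(1 − γ/η)^T. -/
open MeasureTheory

theorem kushner_bound_case1 {Ω : Type*} {m0 : MeasurableSpace Ω} {μ : Measure Ω}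
    [IsProbabilityMeasure μ] (ℱ : Filtration ℕ m0)
    (B : ℕ → Ω → ℝ)
    (hnonneg : ∀ k ω, 0 ≤ B k ω)
    (hadapted : Adapted ℱ B)
    (hint : ∀ k, Integrable (B k) μ)
    (κ γ α η : ℝ) (hκ0 : 0 < κ) (hκ1 : κ < 1) (hγ : 0 ≤ γ) (hα : 0 ≤ α)
    (hη0 : 0 < η) (hη : γ / (1 - κ) ≤ η)
    (hcond : ∀ k, μ[B (k + 1) | ℱ k] ≤ᵐ[μ] fun ω => κ * B k ω + γ)
    (hB0 : ∀ ω, B 0 ω ≤ α)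
    (T : ℕ) :
    (μ {ω | ∃ k ≤ T, η ≤ B k ω}).toReal ≤ 1 - (1 - α / η) * (1 - γ / η) ^ T := by
  classical
  have hκ1' : (0:ℝ) < 1 - κ := by linarith
  have hγle : γ ≤ η * (1 - κ) := by
    have := (div_le_iff₀ hκ1').mp hη; linarith
  set q : ℝ := 1 - γ / η with hqdef
  have hq : η * q = η - γ := by rw [hqdef]; field_simp
  have hκq : κ ≤ q := by
    rw [hqdef]
    have : γ / η ≤ 1 - κ := (div_le_iff₀ hη0).mpr (by linarith)
    linarith
  have hq0 : 0 ≤ q := le_trans hκ0.le hκq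
  set A : ℕ → Set Ω := fun k => {ω | ∀ j ≤ k, B j ω < η} with hAdef
  have hBm : ∀ n, Measurable (B n) := fun n =>
    (hadapted n).mono (ℱ.le n) le_rfl
  have hAF : ∀ k, MeasurableSet[ℱ k] (A k) := by
    intro k
    have hrw : A k = ⋂ j ∈ Finset.range (k + 1), {ω | B j ω < η} := by
      ext ω; simp [hAdef, Nat.lt_succ_iff]
    rw [hrw]
    refine Finset.measurableSet_biInter _ fun j hj => ?_
    have hj' : j ≤ k := Nat.lt_succ_iff.mp (Finset.mem_range.mp hj)
    have hsm : Measurable[ℱ k] (B j) := (hadapted j).mono (ℱ.mono hj') le_rfl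
    exact measurableSet_lt hsm measurable_const
  have hAm : ∀ k, MeasurableSet (A k) := fun k => ℱ.le k _ (hAF k)
  have hm0 : ∀ k, (0:ℝ) ≤ ∫ ω in A k, B k ω ∂μ := fun k =>
    setIntegral_nonneg (hAm k) fun ω _ => hnonneg k ω
  -- integral step bound
  have hIle : ∀ k, ∫ ω in A k, B (k + 1) ω ∂μ ≤
      κ * (∫ ω in A k, B k ω ∂μ) + γ * (μ (A k)).toReal := by
    intro k
    have h1 : ∫ ω in A k, B (k + 1) ω ∂μ = ∫ ω in A k, (μ[B (k + 1)|ℱ k]) ω ∂μ :=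
      (setIntegral_condExp (ℱ.le k) (hint (k + 1)) (hAF k)).symm
    rw [h1]
    have h2 : ∫ ω in A k, (μ[B (k + 1)|ℱ k]) ω ∂μ ≤ ∫ ω in A k, (κ * B k ω + γ) ∂μ :=
      setIntegral_mono_ae (integrable_condExp.integrableOn)
        (((hint k).const_mul κ).add (integrable_const γ)).integrableOn (hcond k)
    refine h2.trans ?_
    rw [integral_add (((hint k).const_mul κ).integrableOn)
      ((integrable_const γ).integrableOn), integral_const_mul, setIntegral_const]
    simp [smul_eq_mul, mul_comm]; exact le_rfl
  -- key induction
  have key : ∀ k, η * ((1 - α / η) * q ^ k) ≤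
      η * (μ (A k)).toReal - ∫ ω in A k, B k ω ∂μ := by
    intro k
    induction k with
    | zero =>
      simp only [pow_zero, mul_one]
      have hcompl : η * (μ (A 0)ᶜ).toReal ≤ ∫ ω in (A 0)ᶜ, B 0 ω ∂μ := by
        refine setIntegral_ge_of_const_le_real (hAm 0).compl (measure_ne_top μ _)
          (fun ω hω => ?_) (hint 0).integrableOn
        simp only [hAdef, Set.mem_compl_iff, Set.mem_setOf_eq, not_forall, not_lt] at hω
        obtain ⟨j, hj, hjω⟩ := hω
        interval_cases j
        exact hjω
      have hsplit : (∫ ω in A 0, B 0 ω ∂μ) + ∫ ω in (A 0)ᶜ, B 0 ω ∂μ = ∫ ω, B 0 ω ∂μ :=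
        integral_add_compl (hAm 0) (hint 0)
      have hEB0 : ∫ ω, B 0 ω ∂μ ≤ α := by
        calc ∫ ω, B 0 ω ∂μ ≤ ∫ _ω, α ∂μ := integral_mono (hint 0) (integrable_const α) hB0
          _ = α := by simp
      have hP : (μ (A 0)).toReal + (μ (A 0)ᶜ).toReal = 1 := by
        have h1 : μ (A 0) + μ (A 0)ᶜ = 1 := by
          rw [measure_add_measure_compl (hAm 0), measure_univ]
        have := congrArg ENNReal.toReal h1
        rwa [ENNReal.toReal_add (measure_ne_top μ _) (measure_ne_top μ _),
          ENNReal.toReal_one] at this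
      have hPc : (μ (A 0)ᶜ).toReal = 1 - (μ (A 0)).toReal := by linarith
      rw [hPc] at hcompl
      have hsub : η * (1 - α / η) = η - α := by field_simp
      nlinarith [hcompl, hsplit, hEB0]
    | succ k ih =>
      set Pk := (μ (A k)).toReal with hPk
      set mk := ∫ ω in A k, B k ω ∂μ with hmk
      set Pk1 := (μ (A (k + 1))).toReal with hPk1
      set mk1 := ∫ ω in A (k + 1), B (k + 1) ω ∂μ with hmk1
      have hgood : A (k + 1) = A k ∩ {ω | B (k + 1) ω < η} := by
        ext ω
        simp only [hAdef, Set.mem_setOf_eq, Set.mem_inter_iff]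
        constructor
        · exact fun h => ⟨fun j hj => h j (hj.trans (Nat.le_succ k)), h (k + 1) le_rfl⟩
        · rintro ⟨h1, h2⟩ j hj
          rcases Nat.lt_succ_iff_lt_or_eq.mp (Nat.lt_succ_of_le hj) with hj' | rfl
          · exact h1 j (Nat.lt_succ_iff.mp hj')
          · exact h2
      set bad : Set Ω := A k ∩ {ω | η ≤ B (k + 1) ω} with hbaddef
      have hbadm : MeasurableSet bad :=
        (hAm k).inter (measurableSet_le measurable_const (hBm (k + 1)))
      have hgoodm : MeasurableSet (A k ∩ {ω | B (k + 1) ω < η}) :=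
        (hAm k).inter (measurableSet_lt (hBm (k + 1)) measurable_const)
      have hU : A k = bad ∪ (A k ∩ {ω | B (k + 1) ω < η}) := by
        ext ω
        simp only [hbaddef, Set.mem_union, Set.mem_inter_iff, Set.mem_setOf_eq]
        constructor
        · intro h; rcases le_or_gt η (B (k + 1) ω) with h' | h'
          · exact Or.inl ⟨h, h'⟩
          · exact Or.inr ⟨h, h'⟩
        · rintro (⟨h, _⟩ | ⟨h, _⟩) <;> exact h
      have hD : Disjoint bad (A k ∩ {ω | B (k + 1) ω < η}) := by
        rw [Set.disjoint_left]
        rintro ω ⟨_, h1⟩ ⟨_, h2⟩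
        simp only [Set.mem_setOf_eq] at h1 h2
        exact absurd h2 (not_lt.mpr h1)
      set mb := (μ bad).toReal with hmb
      have hPsum : Pk = mb + Pk1 := by
        rw [hPk, hPk1, hgood]
        conv_lhs => rw [hU]
        rw [measure_union hD hgoodm,
          ENNReal.toReal_add (measure_ne_top μ _) (measure_ne_top μ _)]
      have hIsplit : ∫ ω in A k, B (k + 1) ω ∂μ =
          (∫ ω in bad, B (k + 1) ω ∂μ) + mk1 := by
        rw [hmk1, hgood]
        conv_lhs => rw [hU]
        exact setIntegral_union hD hgoodm (hint _).integrableOn (hint _).integrableOn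
      have hbadge : η * mb ≤ ∫ ω in bad, B (k + 1) ω ∂μ := by
        exact setIntegral_ge_of_const_le_real hbadm (measure_ne_top μ _)
          (fun ω hω => hω.2) (hint _).integrableOn
      have hI := hIle k
      rw [← hmk, ← hPk] at hI
      have h1 : κ * mk ≤ q * mk := mul_le_mul_of_nonneg_right hκq (hm0 k)
      have h2 : q * (η * Pk - mk) ≤ η * Pk1 - mk1 := by
        have e1 : q * (η * Pk - mk) = (η * q) * Pk - q * mk := by ring
        rw [e1, hq]
        have hηP : η * Pk = η * mb + η * Pk1 := by rw [hPsum]; ring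
        nlinarith [hbadge, hIsplit, hI, h1, hηP]
      calc η * ((1 - α / η) * q ^ (k + 1)) = q * (η * ((1 - α / η) * q ^ k)) := by ring
        _ ≤ q * (η * Pk - mk) := mul_le_mul_of_nonneg_left ih hq0
        _ ≤ η * Pk1 - mk1 := h2
  -- conclude
  have hset : {ω | ∃ k ≤ T, η ≤ B k ω} = (A T)ᶜ := by
    ext ω
    simp [hAdef, not_lt]
  rw [hset]
  have hPcT : (μ (A T)ᶜ).toReal = 1 - (μ (A T)).toReal := by
    have h1 : μ (A T) + μ (A T)ᶜ = 1 := by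
      rw [measure_add_measure_compl (hAm T), measure_univ]
    have := congrArg ENNReal.toReal h1
    rw [ENNReal.toReal_add (measure_ne_top μ _) (measure_ne_top μ _),
      ENNReal.toReal_one] at this
    linarith
  rw [hPcT]
  have hk := key T
  have hmT := hm0 T
  have : (1 - α / η) * q ^ T ≤ (μ (A T)).toReal := by
    have h3 : η * ((1 - α / η) * q ^ T) ≤ η * (μ (A T)).toReal := by linarith
    exact le_of_mul_le_mul_left h3 hη0
  rw [hqdef] at this
  linarith
end

section
/- Let (B_k)_{k∈ℕ} be a nonnegative stochastic process adapted to a filtration, and suppose there exist constants 0 < κ < 1 and γ ≥ 0 such that E[B_{k+1} | F_k] ≤ κ B_k + γ for all k. Then for any 0 < η < γ/(1−κ), any time horizon T ∈ ℕ, and any initial value B_0 = b ≤ α, the probability that sup_{0 ≤ k ≤ T} B_k ≥ η is at most (α/η)κ^T + (γ/((1−κ)η))(1 − κ^T). -/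
open MeasureTheory

theorem kushner_bound_case2 {Ω : Type*} {m0 : MeasurableSpace Ω} {μ : Measure Ω}
    [IsProbabilityMeasure μ] (ℱ : Filtration ℕ m0)
    (B : ℕ → Ω → ℝ)
    (hnonneg : ∀ k ω, 0 ≤ B k ω)
    (hadapted : Adapted ℱ B)
    (hint : ∀ k, Integrable (B k) μ)
    (κ γ α η : ℝ) (hκ0 : 0 < κ) (hκ1 : κ < 1) (hγ : 0 ≤ γ) (hα : 0 ≤ α)
    (hη0 : 0 < η) (hη : η < γ / (1 - κ))
    (hcond : ∀ k, μ[B (k + 1) | ℱ k] ≤ᵐ[μ] fun ω => κ * B k ω + γ)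
    (hB0 : ∀ ω, B 0 ω ≤ α)
    (T : ℕ) :
    (μ {ω | ∃ k ≤ T, η ≤ B k ω}).toReal ≤
      (α / η) * κ ^ T + (γ / ((1 - κ) * η)) * (1 - κ ^ T) := by
  have hκ1' : (0:ℝ) < 1 - κ := by linarith
  -- the auxiliary supermartingale
  set c : ℕ → ℝ := fun m => γ * ∑ j ∈ Finset.range m, κ ^ j with hc
  have hc_nonneg : ∀ m, 0 ≤ c m := fun m =>
    mul_nonneg hγ (Finset.sum_nonneg fun j _ => (pow_pos hκ0 j).le)
  set N : ℕ → Ω → ℝ := fun k ω => κ ^ (T - k) * B (min k T) ω + c (T - k) with hN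
  have hNadp : Adapted ℱ N := by
    intro k
    exact (((hadapted (min k T)).mono (ℱ.mono (min_le_left k T)) le_rfl).const_mul _).add
      measurable_const
  have hNint : ∀ k, Integrable (N k) μ := fun k =>
    (((hint (min k T)).const_mul _).add (integrable_const _))
  have hNnonneg : ∀ k ω, 0 ≤ N k ω := fun k ω =>
    add_nonneg (mul_nonneg (pow_pos hκ0 _).le (hnonneg _ _)) (hc_nonneg _)
  have hNsuper : Supermartingale N ℱ μ := by
    refine supermartingale_nat hNadp.stronglyAdapted hNint fun k => ?_
    rcases lt_or_ge k T with hk | hk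
    · -- k < T
      have h1 : min (k+1) T = k + 1 := min_eq_left hk
      have h2 : min k T = k := min_eq_left hk.le
      have h3 : T - (k+1) + 1 = T - k := by omega
      have heq : N (k+1) = (κ ^ (T - (k+1)) • B (k+1)) + (fun _ => c (T - (k+1))) := by
        funext ω; simp [hN, h1, smul_eq_mul]
      have hce : μ[N (k+1) | ℱ k] =ᵐ[μ]
          fun ω => κ ^ (T - (k+1)) • (μ[B (k+1) | ℱ k]) ω + c (T - (k+1)) := by
        rw [heq]
        refine (condExp_add ((hint (k+1)).smul _) (integrable_const _) _).trans ?_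
        have hs := condExp_smul (𝕜 := ℝ) (μ := μ) (m := ℱ k) (κ ^ (T - (k+1))) (B (k+1))
        have hcst := condExp_const (μ := μ) (ℱ.le k) (c (T - (k+1)))
        filter_upwards [hs] with ω h1'
        simp only [Pi.add_apply]
        rw [hcst, h1']
        simp
      refine hce.le.trans ?_
      filter_upwards [hcond k] with ω hω
      have : κ ^ (T - (k+1)) • (μ[B (k+1) | ℱ k]) ω ≤ κ ^ (T - (k+1)) * (κ * B k ω + γ) := by
        simpa [smul_eq_mul] using mul_le_mul_of_nonneg_left hω (pow_pos hκ0 _).le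
      have hcstep : c (T - k) = c (T - (k+1)) + γ * κ ^ (T - (k+1)) := by
        rw [hc]; simp only []
        rw [← h3, Finset.sum_range_succ]; ring
      have hpow : κ ^ (T - (k+1)) * κ = κ ^ (T - k) := by
        rw [← h3, pow_succ]
      simp only [hN, h2]
      calc κ ^ (T - (k+1)) • (μ[B (k+1) | ℱ k]) ω + c (T - (k+1))
          ≤ κ ^ (T - (k+1)) * (κ * B k ω + γ) + c (T - (k+1)) := by linarith
        _ = κ ^ (T - k) * B k ω + c (T - k) := by rw [hcstep, ← hpow]; ring
    · -- k ≥ T : the process is frozen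
      have h1 : min (k+1) T = T := min_eq_right (by omega)
      have h2 : min k T = T := min_eq_right hk
      have h3 : T - (k+1) = 0 := by omega
      have h4 : T - k = 0 := by omega
      have heq : N (k+1) = N k := by
        funext ω; simp [hN, h1, h2, h3, h4]
      rw [heq]
      have hms : StronglyMeasurable[ℱ k] (N k) := by
        simp only [hN, h2, h4]
        exact ((((hadapted T).mono (ℱ.mono hk) le_rfl).const_mul _).add measurable_const).stronglyMeasurable
      rw [condExp_of_stronglyMeasurable (ℱ.le k) hms (hNint k)]
  -- hitting time
  set τ : Ω → WithTop ℕ := fun ω => (hittingBtwn N {y : ℝ | η ≤ y} 0 T ω : ℕ) with hτdef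
  have hτ : IsStoppingTime ℱ τ :=
    hNadp.isStoppingTime_hittingBtwn (isClosed_Ici.measurableSet)
  have hτle : ∀ ω, τ ω ≤ T := fun ω => WithTop.coe_le_coe.mpr (hittingBtwn_le ω)
  -- the event
  set A : Set Ω := {ω | ∃ k ≤ T, η ≤ B k ω} with hA
  have hAmeas : MeasurableSet A := by
    have : A = ⋃ k ∈ Finset.range (T+1), B k ⁻¹' Set.Ici η := by
      ext ω
      simp only [hA, Set.mem_setOf_eq, Set.mem_iUnion, Finset.mem_range, Set.mem_preimage,
        Set.mem_Ici]
      constructor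
      · rintro ⟨k, hk, hkb⟩; exact ⟨k, by omega, hkb⟩
      · rintro ⟨k, hk, hkb⟩; exact ⟨k, by omega, hkb⟩
    rw [this]
    exact MeasurableSet.biUnion (Finset.range (T+1)).countable_toSet
      fun k _ => (ℱ.le k _ ((hadapted k) measurableSet_Ici))
  -- on A the stopped value is at least η
  have hηγ : η * (1 - κ) ≤ γ := by
    have := (lt_div_iff₀ hκ1').mp hη; linarith
  have hstop_ge : ∀ ω ∈ A, η ≤ stoppedValue N τ ω := by
    intro ω hω
    obtain ⟨k, hk, hkb⟩ := hω
    have hNk : η ≤ N k ω := by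
      have h5 : min k T = k := min_eq_left hk
      simp only [hN, h5]
      set m := T - k
      have hκm : κ ^ m ≤ 1 := pow_le_one₀ hκ0.le hκ1.le
      have hκm0 : 0 ≤ κ ^ m := (pow_pos hκ0 m).le
      have hgeom : ∑ j ∈ Finset.range m, κ ^ j = (1 - κ ^ m) / (1 - κ) := by
        rw [geom_sum_eq (by linarith : κ ≠ 1)]
        rw [div_eq_div_iff (by linarith) (by linarith)]; ring
      have hcγ : η * (1 - κ ^ m) ≤ c m := by
        have hx : (0:ℝ) ≤ (1 - κ ^ m) / (1 - κ) := div_nonneg (by linarith) hκ1'.le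
        have hcm : c m = γ * ((1 - κ ^ m) / (1 - κ)) := by rw [hc]; dsimp only; rw [hgeom]
        rw [hcm]
        calc η * (1 - κ ^ m) = (η * (1 - κ)) * ((1 - κ ^ m) / (1 - κ)) := by
              field_simp
          _ ≤ γ * ((1 - κ ^ m) / (1 - κ)) := mul_le_mul_of_nonneg_right hηγ hx
      nlinarith [mul_le_mul_of_nonneg_left hkb hκm0]
    have hmem : stoppedValue N τ ω ∈ {y : ℝ | η ≤ y} :=
      stoppedValue_hittingBtwn_mem ⟨k, ⟨Nat.zero_le _, hk⟩, hNk⟩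
    exact hmem
  -- integrability of stopped value
  have hsubneg : Submartingale (-N) ℱ μ := hNsuper.neg
  have hsv_int : Integrable (stoppedValue N τ) μ := by
    have h := hsubneg.integrable_stoppedValue hτ hτle
    have h' : stoppedValue (-N) τ = fun ω => -stoppedValue N τ ω := rfl
    rw [h'] at h
    have h2 : (fun ω => -stoppedValue N τ ω) = -(stoppedValue N τ) := rfl
    rw [h2, integrable_neg_iff] at h
    exact h
  -- optional stopping: E[stoppedValue N τ] ≤ E[N 0]
  have hOS : ∫ ω, stoppedValue N τ ω ∂μ ≤ ∫ ω, N 0 ω ∂μ := by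
    have h0 : IsStoppingTime ℱ (fun _ : Ω => ((0:ℕ) : WithTop ℕ)) := isStoppingTime_const ℱ 0
    have h := hsubneg.expected_stoppedValue_mono h0 hτ (fun ω => WithTop.coe_le_coe.mpr (Nat.zero_le _))
      (N := T) hτle
    change ∫ x, (-N) 0 x ∂μ ≤ _ at h
    have hneg1 : ∫ ω, stoppedValue (-N) τ ω ∂μ = -∫ ω, stoppedValue N τ ω ∂μ := by
      rw [← integral_neg]
      congr 1
    have hneg2 : ∫ ω, (-N) 0 ω ∂μ = -∫ ω, N 0 ω ∂μ := by
      rw [← integral_neg]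
      congr 1
    rw [hneg1, hneg2] at h
    linarith
  -- E[N 0] ≤ κ^T α + c T
  have hEN0 : ∫ ω, N 0 ω ∂μ ≤ κ ^ T * α + c T := by
    have h1 : ∫ ω, N 0 ω ∂μ = κ ^ T * ∫ ω, B 0 ω ∂μ + c T := by
      simp only [hN, Nat.sub_zero, Nat.zero_min]
      rw [integral_add ((hint 0).const_mul _) (integrable_const _),
        integral_const, integral_const_mul]
      simp
    rw [h1]
    have : ∫ ω, B 0 ω ∂μ ≤ α := by
      calc ∫ ω, B 0 ω ∂μ ≤ ∫ _, α ∂μ := integral_mono (hint 0) (integrable_const _) hB0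
        _ = α := by simp
    nlinarith [(pow_pos hκ0 T).le]
  -- Chebyshev step: η * μ(A) ≤ E[stoppedValue N τ]
  have hCheb : η * (μ A).toReal ≤ ∫ ω, stoppedValue N τ ω ∂μ := by
    have h1 : η * (μ A).toReal = ∫ ω in A, η ∂μ := by
      rw [setIntegral_const, smul_eq_mul, mul_comm]; rfl
    rw [h1]
    calc ∫ ω in A, η ∂μ ≤ ∫ ω in A, stoppedValue N τ ω ∂μ := by
          refine setIntegral_mono_on (integrable_const _) hsv_int.integrableOn hAmeas ?_
          exact fun ω hω => hstop_ge ω hω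
      _ ≤ ∫ ω, stoppedValue N τ ω ∂μ := by
          refine setIntegral_le_integral hsv_int ?_
          exact Filter.Eventually.of_forall fun ω => hNnonneg _ ω
  -- combine
  have key : η * (μ A).toReal ≤ κ ^ T * α + c T := le_trans hCheb (le_trans hOS hEN0)
  have hgeomT : c T = γ * ((1 - κ ^ T) / (1 - κ)) := by
    have hg : ∑ j ∈ Finset.range T, κ ^ j = (1 - κ ^ T) / (1 - κ) := by
      rw [geom_sum_eq (by linarith : κ ≠ 1)]
      rw [div_eq_div_iff (by linarith) (by linarith)]; ring
    rw [hc]; dsimp only; rw [hg]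
  rw [hgeomT] at key
  have hRHS : η * ((α / η) * κ ^ T + (γ / ((1 - κ) * η)) * (1 - κ ^ T))
      = κ ^ T * α + γ * ((1 - κ ^ T) / (1 - κ)) := by
    field_simp
  have := key.trans_eq hRHS.symm
  exact le_of_mul_le_mul_left this hη0
end

section
/- Let κ₁ > 0, κ₂ ≥ 1, τ > 0, 0 < ε₁ < 1, and q₁, q₂ ∈ ℕ with 1 ≤ q₁ ≤ q₂, and suppose ln(κ₂) − κ₁ τ z < 0 for all integers z with q₁ ≤ z ≤ q₂. Define κ = max{e^{−κ₁τ(1−ε₁)}, e^{−κ₁ τ ε₁ q₁} κ₂}. Then 0 < κ < 1 provided ε₁ q₁ κ₁ τ > ln κ₂, and for every integer z with 0 ≤ z ≤ q₂ − 1 and every B ≥ 0 and γ₁ ≥ 0: e^{κ₁ τ ε₁ (z+1)} · e^{−κ₁τ}(B + τγ₁) ≤ κ · e^{κ₁ τ ε₁ z} B + e^{κ₁ τ ε₁ q₂} e^{−κ₁ τ} τ γ₁. -/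
theorem case2_flow (κ₁ κ₂ τ ε₁ : ℝ) (q₁ q₂ : ℕ)
    (hκ₁ : 0 < κ₁) (hκ₂ : 1 ≤ κ₂) (hτ : 0 < τ)
    (hε₁0 : 0 < ε₁) (hε₁1 : ε₁ < 1)
    (hq₁ : 1 ≤ q₁) (hq : q₁ ≤ q₂)
    (hlog : ∀ z : ℕ, q₁ ≤ z → z ≤ q₂ → Real.log κ₂ - κ₁ * τ * z < 0) :
    (ε₁ * q₁ * κ₁ * τ > Real.log κ₂ →
      0 < max (Real.exp (-κ₁ * τ * (1 - ε₁))) (Real.exp (-κ₁ * τ * ε₁ * q₁) * κ₂) ∧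
      max (Real.exp (-κ₁ * τ * (1 - ε₁))) (Real.exp (-κ₁ * τ * ε₁ * q₁) * κ₂) < 1) ∧
    (∀ z : ℕ, z + 1 ≤ q₂ → ∀ B γ₁ : ℝ, 0 ≤ B → 0 ≤ γ₁ →
      Real.exp (κ₁ * τ * ε₁ * (z + 1)) * (Real.exp (-κ₁ * τ) * (B + τ * γ₁)) ≤
        max (Real.exp (-κ₁ * τ * (1 - ε₁))) (Real.exp (-κ₁ * τ * ε₁ * q₁) * κ₂) *
          (Real.exp (κ₁ * τ * ε₁ * z) * B) +
        Real.exp (κ₁ * τ * ε₁ * q₂) * Real.exp (-κ₁ * τ) * τ * γ₁) := by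
  constructor
  · intro hgt
    refine ⟨lt_max_iff.2 (Or.inl (Real.exp_pos _)), max_lt ?_ ?_⟩
    · rw [Real.exp_lt_one_iff]
      nlinarith [mul_pos hκ₁ hτ]
    · have hκ₂0 : (0:ℝ) < κ₂ := by linarith
      calc Real.exp (-κ₁ * τ * ε₁ * q₁) * κ₂
          = Real.exp (-κ₁ * τ * ε₁ * q₁ + Real.log κ₂) := by
            rw [Real.exp_add, Real.exp_log hκ₂0]
        _ < 1 := by
            rw [Real.exp_lt_one_iff]
            nlinarith
  · intro z hz B γ₁ hB hγ₁
    have h1 : Real.exp (κ₁ * τ * ε₁ * (z + 1)) * Real.exp (-κ₁ * τ) * B ≤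
        max (Real.exp (-κ₁ * τ * (1 - ε₁))) (Real.exp (-κ₁ * τ * ε₁ * q₁) * κ₂) *
          (Real.exp (κ₁ * τ * ε₁ * z) * B) := by
      have : Real.exp (κ₁ * τ * ε₁ * (z + 1)) * Real.exp (-κ₁ * τ) =
          Real.exp (-κ₁ * τ * (1 - ε₁)) * Real.exp (κ₁ * τ * ε₁ * z) := by
        rw [← Real.exp_add, ← Real.exp_add]; ring_nf
      rw [this, mul_assoc]
      exact mul_le_mul_of_nonneg_right (le_max_left _ _)
        (mul_nonneg (Real.exp_pos _).le hB)
    have h2 : Real.exp (κ₁ * τ * ε₁ * (z + 1)) * Real.exp (-κ₁ * τ) * (τ * γ₁) ≤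
        Real.exp (κ₁ * τ * ε₁ * q₂) * Real.exp (-κ₁ * τ) * τ * γ₁ := by
      have he : Real.exp (κ₁ * τ * ε₁ * (z + 1)) ≤ Real.exp (κ₁ * τ * ε₁ * q₂) := by
        apply Real.exp_le_exp.2
        have hz' : ((z:ℝ) + 1) ≤ (q₂:ℝ) := by exact_mod_cast hz
        nlinarith [mul_pos (mul_pos hκ₁ hτ) hε₁0]
      have := mul_le_mul_of_nonneg_right he
        (mul_nonneg (Real.exp_pos (-κ₁ * τ)).le (mul_nonneg hτ.le hγ₁))
      nlinarith [this]
    nlinarith [h1, h2]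
end
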